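/- The ratio of consecutive unit-ball volumes satisfies √n · V_n/V_{n-1} = √(2π)·(1 − 1/(4n) + O(1/n²)) as n → ∞; in particular √n · V_n/V_{n-1} → √(2π). -/

import Mathlib

open Filter Real

/-- `V n` is the volume of the unit ball in `ℝ^n`. -/
noncomputable def unitBallVol (n : ℕ) : ℝ :=
  Real.pi ^ ((n : ℝ) / 2) / Real.Gamma ((n : ℝ) / 2 + 1)

namespace Stmt11Aux

noncomputable def R (x : ℝ) : ℝ := Real.Gamma (x + 1) / Real.Gamma (x + 1/2)
noncomputable def h (x : ℝ) (m : ℕ) : ℝ := Real.sqrt ((2*x+1)/(2*x+1+m)) / 4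

lemma gamma_sq_le (x : ℝ) (hx : 0 < x) :
    Real.Gamma (x + 1/2) ^ 2 ≤ Real.Gamma x * Real.Gamma (x + 1) := by
  have hconv := Real.convexOn_log_Gamma
  have h := hconv.2 (Set.mem_Ioi.2 hx) (Set.mem_Ioi.2 (by linarith : (0:ℝ) < x + 1))
      (by norm_num : (0:ℝ) ≤ 1/2) (by norm_num : (0:ℝ) ≤ 1/2) (by norm_num)
  simp only [smul_eq_mul, Function.comp_apply] at h
  have hpt : 1/2 * x + 1/2 * (x + 1) = x + 1/2 := by ring
  rw [hpt] at h
  have h0 : (0:ℝ) < Real.Gamma (x + 1/2) := Real.Gamma_pos_of_pos (by linarith)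
  have h1 : (0:ℝ) < Real.Gamma x := Real.Gamma_pos_of_pos hx
  have h2 : (0:ℝ) < Real.Gamma (x + 1) := Real.Gamma_pos_of_pos (by linarith)
  calc Real.Gamma (x + 1/2) ^ 2
      = Real.exp (Real.log (Real.Gamma (x + 1/2)) + Real.log (Real.Gamma (x + 1/2))) := by
        rw [Real.exp_add, Real.exp_log h0]; ring
    _ ≤ Real.exp (Real.log (Real.Gamma x) + Real.log (Real.Gamma (x + 1))) :=
        Real.exp_le_exp.2 (by linarith)
    _ = Real.Gamma x * Real.Gamma (x + 1) := by rw [Real.exp_add, Real.exp_log h1, Real.exp_log h2]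

lemma R_pos (x : ℝ) (hx : 0 < x) : 0 < R x :=
  div_pos (Real.Gamma_pos_of_pos (by linarith)) (Real.Gamma_pos_of_pos (by linarith))

lemma R_sq_lower (x : ℝ) (hx : 0 < x) : x ≤ R x ^ 2 := by
  have h0 : (0:ℝ) < Real.Gamma (x + 1/2) := Real.Gamma_pos_of_pos (by linarith)
  have h1 : (0:ℝ) < Real.Gamma x := Real.Gamma_pos_of_pos hx
  have hfe : Real.Gamma (x + 1) = x * Real.Gamma x := Real.Gamma_add_one hx.ne'
  have key := gamma_sq_le x hx
  rw [R, div_pow, le_div_iff₀ (by positivity)]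
  nlinarith [mul_le_mul_of_nonneg_left key hx.le]

lemma R_sq_upper (x : ℝ) (hx : 0 < x) : R x ^ 2 ≤ x + 1/2 := by
  have hx2 : (0:ℝ) < x + 1/2 := by linarith
  have h0 : (0:ℝ) < Real.Gamma (x + 1/2) := Real.Gamma_pos_of_pos hx2
  have key := gamma_sq_le (x + 1/2) hx2
  have hfe : Real.Gamma (x + 1/2 + 1) = (x + 1/2) * Real.Gamma (x + 1/2) :=
    Real.Gamma_add_one hx2.ne'
  have hpt : x + 1/2 + 1/2 = x + 1 := by ring
  rw [hpt, hfe] at key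
  rw [R, div_pow, div_le_iff₀ (by positivity)]
  nlinarith

lemma R_recur (x : ℝ) (hx : 0 < x) : R x * R (x + 1/2) = x + 1/2 := by
  have h0 : (0:ℝ) < Real.Gamma (x + 1/2) := Real.Gamma_pos_of_pos (by linarith)
  have h1 : (0:ℝ) < Real.Gamma (x + 1) := Real.Gamma_pos_of_pos (by linarith)
  have hfe : Real.Gamma (x + 1/2 + 1) = (x + 1/2) * Real.Gamma (x + 1/2) :=
    Real.Gamma_add_one (by linarith)
  have hpt : x + 1/2 + 1/2 = x + 1 := by ring
  rw [R, R, hpt, hfe]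
  field_simp


lemma h_nonneg (x : ℝ) (m : ℕ) : 0 ≤ h x m := by
  unfold h; positivity

lemma h_le (x : ℝ) (m : ℕ) (hx : 0 < x) : h x m ≤ 1/4 := by
  unfold h
  have h1 : (2*x+1)/(2*x+1+m) ≤ 1 := by
    rw [div_le_one (by positivity)]
    simp [Nat.cast_nonneg]
  have := Real.sqrt_le_sqrt h1
  rw [Real.sqrt_one] at this
  linarith

lemma h_zero (x : ℝ) (hx : 0 < x) : h x 0 = 1/4 := by
  unfold h
  norm_num
  intro hc; linarith

lemma h_key (x : ℝ) (m : ℕ) (hx : 0 < x) :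
    h (x + 1/2) m * (x + 1/4) ≤ h x (m+1) * (x + 1/2) := by
  unfold h
  have hD : (0:ℝ) < 2*x+2+m := by positivity
  have e1 : 2*(x+1/2)+1+(m:ℝ) = 2*x+2+m := by ring
  have e2 : 2*x+1+((m:ℕ)+1 : ℕ) = 2*x+2+(m:ℝ) := by push_cast; ring
  rw [e1, e2]
  have hs1 : Real.sqrt ((2*(x+1/2)+1)/(2*x+2+m)) * (x+1/4) / 4
      = Real.sqrt ((2*(x+1/2)+1)/(2*x+2+m) * (x+1/4)^2) / 4 := by
    rw [Real.sqrt_mul (by positivity), Real.sqrt_sq (by linarith)]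
  have hs2 : Real.sqrt ((2*x+1)/(2*x+2+m)) * (x+1/2) / 4
      = Real.sqrt ((2*x+1)/(2*x+2+m) * (x+1/2)^2) / 4 := by
    rw [Real.sqrt_mul (by positivity), Real.sqrt_sq (by linarith)]
  rw [div_mul_eq_mul_div, div_mul_eq_mul_div, hs1, hs2]
  have hAB : (2*(x+1/2)+1)/(2*x+2+m) * (x+1/4)^2 ≤ (2*x+1)/(2*x+2+m) * (x+1/2)^2 := by
    rw [div_mul_eq_mul_div, div_mul_eq_mul_div, div_le_div_iff₀ hD hD]
    nlinarith
  have := Real.sqrt_le_sqrt hAB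
  linarith


set_option maxHeartbeats 1000000 in
lemma key (m : ℕ) : ∀ x : ℝ, 1/2 ≤ x →
    x + 1/4 - h x m ≤ R x ^ 2 ∧ R x ^ 2 ≤ x + 1/4 + 1/(16*x) + h x m := by
  induction m with
  | zero =>
    intro x hx
    have hx0 : (0:ℝ) < x := by linarith
    have h1 := R_sq_lower x hx0
    have h2 := R_sq_upper x hx0
    have h3 := h_zero x hx0
    have h4 : 0 < 1/(16*x) := by positivity
    constructor <;> rw [h3] <;> linarith
  | succ m ih =>
    intro x hx
    have hx0 : (0:ℝ) < x := by linarith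
    have hx1 : (1:ℝ)/2 ≤ x + 1/2 := by linarith
    have hx10 : (0:ℝ) < x + 1/2 := by linarith
    obtain ⟨ihl, ihu⟩ := ih (x + 1/2) hx1
    have hSpos : 0 < R (x + 1/2) ^ 2 := pow_pos (R_pos _ hx10) 2
    set S := R (x + 1/2) ^ 2 with hSdef
    set H' := h (x + 1/2) m with hH'def
    set H := h x (m+1) with hHdef
    have hH'0 : 0 ≤ H' := h_nonneg _ _
    have hH'le : H' ≤ 1/4 := h_le _ _ hx10
    have hH0 : 0 ≤ H := h_nonneg _ _
    have hHle : H ≤ 1/4 := h_le _ _ hx0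
    have hkey : H' * (x + 1/4) ≤ H * (x + 1/2) := h_key x m hx0
    clear_value S H' H
    -- S bounds (note (x+1/2)+1/4 = x+3/4)
    have hSlow : x + 3/4 - H' ≤ S := by linarith
    have hb : (1:ℝ)/(16*(x+1/2)) * (x+1/2) = 1/16 := by field_simp
    have hb0 : (0:ℝ) < 1/(16*(x+1/2)) := by positivity
    have hSup : S ≤ x + 3/4 + 1/(16*(x+1/2)) + H' := by linarith
    have ha : (1:ℝ)/(16*x) * x = 1/16 := by field_simp
    have ha0 : (0:ℝ) < 1/(16*x) := by positivity
    have hSge : x + 1/2 ≤ S := by linarith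
    -- R x ^ 2 = (x+1/2)^2 / S
    have hprod : R x ^ 2 * S = (x + 1/2)^2 := by
      rw [hSdef, ← mul_pow, R_recur x hx0]
    have hRx : R x ^ 2 = (x + 1/2)^2 / S := by
      field_simp at hprod ⊢
      linarith
    rw [hRx]
    constructor
    · rw [le_div_iff₀ hSpos]
      have hxH : 0 ≤ x + 1/4 - H := by linarith
      have hstep : (x + 1/4 - H) * S ≤ (x + 1/4 - H) * (x + 3/4 + 1/(16*(x+1/2)) + H') :=
        mul_le_mul_of_nonneg_left hSup hxH
      have hb4 : (x + 1/4) * (1/(16*(x+1/2))) ≤ 1/16 := by nlinarith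
      nlinarith [mul_nonneg hH0 hH'0, mul_nonneg hH0 hb0.le]
    · rw [div_le_iff₀ hSpos]
      have hcoef : 0 ≤ x + 1/4 + 1/(16*x) + H := by linarith
      have hstep : (x + 1/4 + 1/(16*x) + H) * (x + 3/4 - H') ≤ (x + 1/4 + 1/(16*x) + H) * S :=
        mul_le_mul_of_nonneg_left hSlow hcoef
      have haH' : 1/(16*x) * H' ≤ 1/(16*x) * (1/4) := by nlinarith
      have hHH' : H * H' ≤ H * (1/4) := by nlinarith
      nlinarith

lemma h_tendsto (x : ℝ) (hx : 0 < x) : Tendsto (fun m : ℕ => h x m) atTop (nhds 0) := by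
  have h1 : Tendsto (fun m : ℕ => 2*x+1+(m:ℝ)) atTop atTop :=
    tendsto_atTop_add_const_left _ _ tendsto_natCast_atTop_atTop
  have h2 : Tendsto (fun m : ℕ => (2*x+1)/(2*x+1+(m:ℝ))) atTop (nhds 0) :=
    Tendsto.div_atTop tendsto_const_nhds h1
  have h3 : Tendsto (fun m : ℕ => Real.sqrt ((2*x+1)/(2*x+1+(m:ℝ)))) atTop (nhds 0) := by
    have := (Real.continuous_sqrt.tendsto 0).comp h2
    simpa [Function.comp_def] using this
  have := h3.div_const 4
  simpa [h] using this

lemma R_sq_bounds (x : ℝ) (hx : 1/2 ≤ x) :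
    x + 1/4 ≤ R x ^ 2 ∧ R x ^ 2 ≤ x + 1/4 + 1/(16*x) := by
  have hx0 : (0:ℝ) < x := by linarith
  constructor
  · have ht : Tendsto (fun m : ℕ => x + 1/4 - h x m) atTop (nhds (x + 1/4)) := by
      simpa using (tendsto_const_nhds (x := (x+1/4 : ℝ)) (f := (atTop : Filter ℕ))).sub (h_tendsto x hx0)
    exact le_of_tendsto ht (Eventually.of_forall fun m => (key m x hx).1)
  · have ht : Tendsto (fun m : ℕ => x + 1/4 + 1/(16*x) + h x m) atTop
        (nhds (x + 1/4 + 1/(16*x))) := by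
      simpa using (tendsto_const_nhds (x := (x+1/4+1/(16*x) : ℝ)) (f := (atTop : Filter ℕ))).add (h_tendsto x hx0)
    exact ge_of_tendsto ht (Eventually.of_forall fun m => (key m x hx).2)


lemma ratio_eq (n : ℕ) (hn : 1 ≤ n) :
    Real.sqrt n * unitBallVol n / unitBallVol (n - 1)
      = Real.sqrt n * Real.sqrt Real.pi / R ((n : ℝ)/2) := by
  have hc : ((n - 1 : ℕ) : ℝ) = (n : ℝ) - 1 := by
    push_cast [Nat.cast_sub hn]
    ring
  have hN1 : (1:ℝ) ≤ (n:ℝ) := by exact_mod_cast hn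
  unfold unitBallVol R
  rw [hc]
  have hG1 : (0:ℝ) < Real.Gamma ((n:ℝ)/2 + 1) := Real.Gamma_pos_of_pos (by linarith)
  have hG2 : (0:ℝ) < Real.Gamma (((n:ℝ)-1)/2 + 1) := Real.Gamma_pos_of_pos (by linarith)
  have hG3 : Real.Gamma ((n:ℝ)/2 + 1/2) = Real.Gamma (((n:ℝ)-1)/2 + 1) := by
    norm_num
    ring_nf
  have hp1 : Real.pi ^ ((n:ℝ)/2) = Real.pi ^ (((n:ℝ)-1)/2) * Real.sqrt Real.pi := by
    rw [Real.sqrt_eq_rpow, ← Real.rpow_add Real.pi_pos]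
    norm_num
    rw [show (n:ℝ)/2 = ((n:ℝ)-1)/2 + 1/2 by ring]
  have hp2 : (0:ℝ) < Real.pi ^ (((n:ℝ)-1)/2) := Real.rpow_pos_of_pos Real.pi_pos _
  rw [hG3, hp1]
  field_simp


set_option maxHeartbeats 1000000 in
lemma estimate (N : ℝ) (hN : 1 ≤ N) :
    |Real.sqrt N * Real.sqrt Real.pi / R (N/2) -
      Real.sqrt (2*Real.pi) * (1 - 1/(4*N))| ≤ 1/N^2 := by
  have hN0 : (0:ℝ) < N := by linarith
  have hx : (1:ℝ)/2 ≤ N/2 := by linarith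
  have hx0 : (0:ℝ) < N/2 := by linarith
  have hRpos : 0 < R (N/2) := R_pos _ hx0
  obtain ⟨hQl, hQu⟩ := R_sq_bounds (N/2) hx
  have hQu' : R (N/2) ^ 2 ≤ N/2 + 1/4 + 1/(8*N) := by
    have e : 16*(N/2) = 8*N := by ring
    rw [e] at hQu; linarith
  have hQpos : 0 < R (N/2) ^ 2 := pow_pos hRpos 2
  set r := Real.sqrt N * Real.sqrt Real.pi / R (N/2) with hrdef
  set t := Real.sqrt (2*Real.pi) * (1 - 1/(4*N)) with htdef
  have hr0 : 0 ≤ r := by positivity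
  have hr2 : r^2 = N * Real.pi / R (N/2) ^ 2 := by
    rw [hrdef, div_pow, mul_pow, Real.sq_sqrt hN0.le, Real.sq_sqrt Real.pi_pos.le]
  have ht2 : t^2 = 2 * Real.pi * (1 - 1/(4*N))^2 := by
    rw [htdef, mul_pow, Real.sq_sqrt (by positivity : (0:ℝ) ≤ 2*Real.pi)]
  -- t ≥ 3/2
  have hsqrt2pi : (2:ℝ) ≤ Real.sqrt (2*Real.pi) := by
    have h4 : (4:ℝ) ≤ 2*Real.pi := by nlinarith [Real.pi_gt_three]
    have := Real.sqrt_le_sqrt h4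
    rwa [show (4:ℝ) = 2^2 by norm_num, Real.sqrt_sq (by norm_num : (0:ℝ) ≤ 2)] at this
  have hfrac : (3:ℝ)/4 ≤ 1 - 1/(4*N) := by
    have : 1/(4*N) ≤ 1/4 := by
      rw [div_le_div_iff₀ (by positivity) (by norm_num)]; linarith
    linarith
  have hfrac1 : 1 - 1/(4*N) ≤ 1 := by
    have : 0 < 1/(4*N) := by positivity
    linarith
  have ht32 : (3:ℝ)/2 ≤ t := by
    rw [htdef]
    nlinarith
  -- upper bound on r^2 - t^2
  have hrat1 : N/(N/2+1/4) - 2*(1-1/(4*N))^2 ≤ 3/(8*N^2) := by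
    have heq : N/(N/2+1/4) - 2*(1-1/(4*N))^2 = (6*N-1)/(8*N^2*(2*N+1)) := by
      field_simp
      ring
    rw [heq, div_le_div_iff₀ (by positivity) (by positivity)]
    nlinarith
  have hrat2 : 2*(1-1/(4*N))^2 - N/(N/2+1/4+1/(8*N)) ≤ 1/(8*N^2) := by
    have heq : 2*(1-1/(4*N))^2 - N/(N/2+1/4+1/(8*N))
        = (4*N^2-6*N+1)/(8*N^2*(4*N^2+2*N+1)) := by
      field_simp
      ring
    rw [heq, div_le_div_iff₀ (by positivity) (by positivity)]
    nlinarith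
  have hr2up : r^2 ≤ Real.pi * (N/(N/2+1/4)) := by
    rw [hr2]
    have h1 : N * Real.pi / R (N/2)^2 ≤ N * Real.pi / (N/2+1/4) := by
      gcongr
    rw [show Real.pi * (N/(N/2+1/4)) = N * Real.pi / (N/2+1/4) by ring]
    exact h1
  have hr2lo : Real.pi * (N/(N/2+1/4+1/(8*N))) ≤ r^2 := by
    rw [hr2]
    have h1 : N * Real.pi / (N/2+1/4+1/(8*N)) ≤ N * Real.pi / R (N/2)^2 := by
      gcongr
    rw [show Real.pi * (N/(N/2+1/4+1/(8*N))) = N * Real.pi / (N/2+1/4+1/(8*N)) by ring]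
    exact h1
  clear_value r t
  -- |r^2 - t^2| ≤ 3π/(8N²)
  have habs2 : |r^2 - t^2| ≤ 3*Real.pi/(8*N^2) := by
    rw [abs_le]
    constructor
    · have h1 := mul_le_mul_of_nonneg_left hrat2 Real.pi_pos.le
      rw [ht2]
      have h2 : 0 ≤ Real.pi * (1/(8*N^2)) := by positivity
      have e : Real.pi * (2*(1-1/(4*N))^2 - N/(N/2+1/4+1/(8*N)))
          = 2*Real.pi*(1-1/(4*N))^2 - Real.pi * (N/(N/2+1/4+1/(8*N))) := by ring
      have e2 : Real.pi * (1/(8*N^2)) ≤ 3*Real.pi/(8*N^2) := by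
        rw [show Real.pi * (1/(8*N^2)) = Real.pi/(8*N^2) by ring]
        gcongr
        linarith [Real.pi_pos]
      linarith [hr2lo]
    · have h1 := mul_le_mul_of_nonneg_left hrat1 Real.pi_pos.le
      rw [ht2]
      have e : Real.pi * (N/(N/2+1/4) - 2*(1-1/(4*N))^2)
          = Real.pi * (N/(N/2+1/4)) - 2*Real.pi*(1-1/(4*N))^2 := by ring
      have e2 : Real.pi * (3/(8*N^2)) = 3*Real.pi/(8*N^2) := by ring
      linarith [hr2up]
  -- |r - t| * t ≤ |r² - t²|
  have hfact : r^2 - t^2 = (r - t) * (r + t) := by ring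
  have ht0 : 0 ≤ t := by linarith
  have habs1 : |r - t| * t ≤ |r^2 - t^2| := by
    rw [hfact, abs_mul, abs_of_nonneg (by linarith : 0 ≤ r + t)]
    have : t ≤ r + t := by linarith
    exact mul_le_mul_of_nonneg_left this (abs_nonneg _)
  -- conclude
  have hN2 : (0:ℝ) < N^2 := by positivity
  rw [le_div_iff₀ hN2]
  have h5 : |r - t| * t * N^2 ≤ 3*Real.pi/8 := by
    have h6 : |r - t| * t * N^2 ≤ (3*Real.pi/(8*N^2)) * N^2 := by
      apply mul_le_mul_of_nonneg_right (le_trans habs1 habs2) hN2.le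
    have h7 : (3*Real.pi/(8*N^2)) * N^2 = 3*Real.pi/8 := by field_simp
    linarith
  have h8 : |r - t| * N^2 * (3/2) ≤ |r - t| * t * N^2 := by
    have := mul_le_mul_of_nonneg_left ht32 (mul_nonneg (abs_nonneg (r-t)) hN2.le)
    nlinarith [abs_nonneg (r-t)]
  nlinarith [Real.pi_le_four, abs_nonneg (r-t)]

end Stmt11Aux

open Stmt11Aux in
theorem stmt11 :
    (∃ C : ℝ, ∀ n : ℕ, 1 ≤ n →
      |Real.sqrt n * unitBallVol n / unitBallVol (n - 1) -
        Real.sqrt (2 * Real.pi) * (1 - 1 / (4 * n))| ≤ C / n ^ 2) ∧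
    Tendsto (fun n : ℕ => Real.sqrt n * unitBallVol n / unitBallVol (n - 1)) atTop
      (nhds (Real.sqrt (2 * Real.pi))) := by
  have hmain : ∀ n : ℕ, 1 ≤ n →
      |Real.sqrt n * unitBallVol n / unitBallVol (n - 1) -
        Real.sqrt (2 * Real.pi) * (1 - 1 / (4 * n))| ≤ 1 / (n:ℝ) ^ 2 := by
    intro n hn
    rw [ratio_eq n hn]
    have hN : (1:ℝ) ≤ (n:ℝ) := by exact_mod_cast hn
    have := estimate (n:ℝ) hN
    convert this using 3 <;> ring
  constructor
  · exact ⟨1, hmain⟩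
  · have h1 : Tendsto (fun n : ℕ => Real.sqrt (2*Real.pi) * (1 - 1/(4*(n:ℝ)))) atTop
        (nhds (Real.sqrt (2*Real.pi))) := by
      have h4n : Tendsto (fun n : ℕ => 4*(n:ℝ)) atTop atTop :=
        (tendsto_natCast_atTop_atTop (R := ℝ)).const_mul_atTop (by norm_num)
      have hz : Tendsto (fun n : ℕ => 1/(4*(n:ℝ))) atTop (nhds 0) :=
        Tendsto.div_atTop tendsto_const_nhds h4n
      have := (tendsto_const_nhds (x := (1:ℝ)) (f := (atTop : Filter ℕ))).sub hz
      rw [sub_zero] at this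
      have := this.const_mul (Real.sqrt (2*Real.pi))
      simpa using this
    have hg : Tendsto (fun n : ℕ => 1/(n:ℝ)^2) atTop (nhds 0) := by
      have hp : Tendsto (fun n : ℕ => ((n:ℝ))^2) atTop atTop :=
        (tendsto_pow_atTop (by norm_num : 2 ≠ 0)).comp (tendsto_natCast_atTop_atTop (R := ℝ))
      exact Tendsto.div_atTop tendsto_const_nhds hp
    have h2 : Tendsto (fun n : ℕ => Real.sqrt n * unitBallVol n / unitBallVol (n - 1) -
        Real.sqrt (2*Real.pi) * (1 - 1/(4*(n:ℝ)))) atTop (nhds 0) := by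
      apply squeeze_zero_norm' _ hg
      filter_upwards [eventually_ge_atTop 1] with n hn
      simpa [Real.norm_eq_abs] using hmain n hn
    have := h2.add h1
    rw [zero_add] at this
    convert this using 2
    ring
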